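/- Let 2 < α < 4 and define u_α(y) = [α/((α−1)3^{α−1})]·(1/y)·[(1+y)^{α−1} − (1−2y)^{α−1}] for y ∈ (0, 1/2]. Then u_α is strictly decreasing on (0, 1/2), i.e., u_α′(y) < 0 for all y ∈ (0, 1/2). -/

import Mathlib

open Real Set

noncomputable section

/-- The function u_α. -/
def uFun (α : ℝ) (y : ℝ) : ℝ :=
  α / ((α - 1) * (3:ℝ) ^ (α - 1)) * (1/y) * ((1 + y) ^ (α - 1) - (1 - 2*y) ^ (α - 1))

lemma wDeriv (β : ℝ) (y : ℝ) (h1 : 0 < 1 + y) (h2 : 0 < 1 - 2*y) :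
    HasDerivAt (fun y : ℝ => (1+y)^β*(β*y-1) + (1-2*y)^β*(1+2*β*y))
      (β*(β+1)*y*((1+y)^(β-1) - 4*(1-2*y)^(β-1))) y := by
  have h1' : HasDerivAt (fun y : ℝ => 1 + y) 1 y := by
    simpa using (hasDerivAt_id y).const_add 1
  have h2' : HasDerivAt (fun y : ℝ => 1 - 2*y) (-2) y := by
    simpa using ((hasDerivAt_id y).const_mul 2).const_sub 1
  have H1 := h1'.rpow_const (p := β) (Or.inl h1.ne')
  have H2 := h2'.rpow_const (p := β) (Or.inl h2.ne')
  have h3 : HasDerivAt (fun y : ℝ => β*y - 1) β y := by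
    simpa using ((hasDerivAt_id y).const_mul β).sub_const 1
  have h4 : HasDerivAt (fun y : ℝ => 1 + 2*β*y) (2*β) y := by
    simpa using ((hasDerivAt_id y).const_mul (2*β)).const_add 1
  have H := (H1.mul h3).add (H2.mul h4)
  have e1 : (1+y)^β = (1+y)^(β-1) * (1+y) := by
    rw [← Real.rpow_add_one h1.ne']; ring_nf
  have e2 : (1-2*y)^β = (1-2*y)^(β-1) * (1-2*y) := by
    rw [← Real.rpow_add_one h2.ne']; ring_nf
  refine H.congr_deriv ?_
  rw [e1, e2]; ring

lemma key (β : ℝ) (hβ0 : 0 < β) (hβ2 : β < 2) :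
    ∀ y ∈ Set.Ioo (0:ℝ) (1/2),
      (1+y)^β*(β*y-1) + (1-2*y)^β*(1+2*β*y) < 0 := by
  set W : ℝ → ℝ := fun y => (1+y)^β*(β*y-1) + (1-2*y)^β*(1+2*β*y) with hWdef
  set D : ℝ → ℝ := fun y => (1+y)^(β-1) - 4*(1-2*y)^(β-1) with hDdef
  have Wcont : Continuous W := by
    apply Continuous.add
    · exact ((continuous_const.add continuous_id).rpow_const
        (fun x => Or.inr hβ0.le)).mul (by continuity)
    · exact ((continuous_const.sub (continuous_const.mul continuous_id)).rpow_const
        (fun x => Or.inr hβ0.le)).mul (by continuity)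
  have Wd : ∀ y ∈ Ioo (0:ℝ) (1/2), deriv W y = β*(β+1)*y*(D y) := by
    intro y hy
    exact (wDeriv β y (by linarith [hy.1]) (by linarith [hy.2])).deriv
  have W0 : W 0 = 0 := by
    simp [hWdef]
  have Whalf : W (1/2) < 0 := by
    have hval : W (1/2) = (3/2:ℝ)^β * (β*(1/2)-1) := by
      simp only [hWdef]
      norm_num [Real.zero_rpow hβ0.ne']
    rw [hval]
    exact mul_neg_of_pos_of_neg (Real.rpow_pos_of_pos (by norm_num) β) (by linarith)
  have Dmono : 1 < β → ∀ a ∈ Icc (0:ℝ) (1/2), ∀ b ∈ Icc (0:ℝ) (1/2), a < b → D a < D b := by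
    intro hβ1 a ha b hb hab
    have t1 : (1+a)^(β-1) < (1+b)^(β-1) :=
      Real.rpow_lt_rpow (by linarith [ha.1]) (by linarith) (by linarith)
    have t2 : (1-2*b)^(β-1) ≤ (1-2*a)^(β-1) :=
      Real.rpow_le_rpow (by linarith [hb.2]) (by linarith) (by linarith)
    simp only [hDdef]
    linarith
  have Dneg : β ≤ 1 → ∀ y ∈ Ioo (0:ℝ) (1/2), D y < 0 := by
    intro hβ1 y hy
    have t1 : (1+y)^(β-1) ≤ 1 :=
      Real.rpow_le_one_of_one_le_of_nonpos (by linarith [hy.1]) (by linarith)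
    have t2 : (1:ℝ) ≤ (1-2*y)^(β-1) :=
      Real.one_le_rpow_of_pos_of_le_one_of_nonpos (by linarith [hy.2]) (by linarith [hy.1])
        (by linarith)
    simp only [hDdef]
    linarith
  intro y hy
  have decCase : (∀ x ∈ Ioo (0:ℝ) y, D x < 0) → W y < 0 := by
    intro hDx
    have hanti : StrictAntiOn W (Icc 0 y) := by
      apply strictAntiOn_of_deriv_neg (convex_Icc 0 y) Wcont.continuousOn
      intro x hx
      rw [interior_Icc] at hx
      have hx' : x ∈ Ioo (0:ℝ) (1/2) := ⟨hx.1, lt_trans hx.2 hy.2⟩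
      rw [Wd x hx']
      exact mul_neg_of_pos_of_neg (mul_pos (mul_pos hβ0 (by linarith)) hx.1) (hDx x hx)
    have := hanti ⟨le_refl 0, hy.1.le⟩ ⟨hy.1.le, le_refl y⟩ hy.1
    rw [W0] at this
    exact this
  have incCase : (∀ x ∈ Ioo y (1/2:ℝ), 0 < D x) → W y < 0 := by
    intro hDx
    have hmono : StrictMonoOn W (Icc y (1/2)) := by
      apply strictMonoOn_of_deriv_pos (convex_Icc y (1/2)) Wcont.continuousOn
      intro x hx
      rw [interior_Icc] at hx
      have hx' : x ∈ Ioo (0:ℝ) (1/2) := ⟨lt_trans hy.1 hx.1, hx.2⟩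
      rw [Wd x hx']
      exact mul_pos (mul_pos (mul_pos hβ0 (by linarith)) hx'.1) (hDx x hx)
    have := hmono ⟨le_refl y, hy.2.le⟩ ⟨hy.2.le, le_refl _⟩ hy.2
    exact this.trans Whalf
  rcases le_or_gt β 1 with hβ1 | hβ1
  · exact decCase (fun x hx => Dneg hβ1 x ⟨hx.1, lt_trans hx.2 hy.2⟩)
  · rcases le_or_gt (D y) 0 with hDy | hDy
    · refine decCase (fun x hx => lt_of_lt_of_le ?_ hDy)
      exact Dmono hβ1 x ⟨hx.1.le, by linarith [hx.2, hy.2]⟩ y ⟨hy.1.le, hy.2.le⟩ hx.2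
    · refine incCase (fun x hx => lt_trans hDy ?_)
      exact Dmono hβ1 y ⟨hy.1.le, hy.2.le⟩ x ⟨by linarith [hy.1, hx.1], hx.2.le⟩ hx.1

/-- For 2 < α < 4, u_α is strictly decreasing on (0,1/2): its derivative is negative. -/
theorem uFun_deriv_neg (α : ℝ) (hα2 : 2 < α) (hα4 : α < 4) :
    ∀ y ∈ Set.Ioo (0:ℝ) (1/2), deriv (uFun α) y < 0 := by
  intro y hy
  have hy0 : 0 < y := hy.1
  have hy2 : y < 1/2 := hy.2
  have h1 : (0:ℝ) < 1 + y := by linarith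
  have h2 : (0:ℝ) < 1 - 2*y := by linarith
  set C : ℝ := α / ((α - 1) * (3:ℝ) ^ (α - 1)) with hC
  have hCpos : 0 < C := by
    apply div_pos (by linarith)
    exact mul_pos (by linarith) (Real.rpow_pos_of_pos (by norm_num) _)
  have hinv : HasDerivAt (fun y : ℝ => 1/y) (-(y^2)⁻¹) y := by
    simpa [one_div] using hasDerivAt_inv hy0.ne'
  have h1' : HasDerivAt (fun y : ℝ => 1 + y) 1 y := by
    simpa using (hasDerivAt_id y).const_add 1
  have h2' : HasDerivAt (fun y : ℝ => 1 - 2*y) (-2) y := by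
    simpa using ((hasDerivAt_id y).const_mul 2).const_sub 1
  have H1 := h1'.rpow_const (p := α-1) (Or.inl h1.ne')
  have H2 := h2'.rpow_const (p := α-1) (Or.inl h2.ne')
  have HF := H1.sub H2
  have HU : HasDerivAt (uFun α)
      (C * -(y^2)⁻¹ * ((1+y)^(α-1) - (1-2*y)^(α-1))
        + C * (1/y) * (1*(α-1)*(1+y)^(α-1-1) - -2*(α-1)*(1-2*y)^(α-1-1))) y := by
    have := (hinv.const_mul C).mul HF
    exact this
  have key' := key (α-2) (by linarith) (by linarith) y hy
  rw [HU.deriv]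
  have e1 : (1+y)^(α-1) = (1+y)^(α-2)*(1+y) := by
    rw [← Real.rpow_add_one h1.ne']; ring_nf
  have e2 : (1-2*y)^(α-1) = (1-2*y)^(α-2)*(1-2*y) := by
    rw [← Real.rpow_add_one h2.ne']; ring_nf
  have e3 : α - 1 - 1 = α - 2 := by ring
  have heq : C * -(y^2)⁻¹ * ((1+y)^(α-1) - (1-2*y)^(α-1))
        + C * (1/y) * (1*(α-1)*(1+y)^(α-1-1) - -2*(α-1)*(1-2*y)^(α-1-1))
      = C * (y^2)⁻¹ * ((1+y)^(α-2)*((α-2)*y-1) + (1-2*y)^(α-2)*(1+2*(α-2)*y)) := by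
    rw [e3, e1, e2]
    field_simp
    ring
  rw [heq]
  exact mul_neg_of_pos_of_neg (mul_pos hCpos (inv_pos.mpr (pow_pos hy0 2))) key'
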